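/- Let q be an odd prime power and n an odd positive integer coprime to q² − 1. Then the Dickson polynomial D_{n,a} (for any a ∈ F_q^×) induces a bijection of F_q. More precisely, the map x ↦ x^n + a^n/x^n on F_{q²}^× descends to show x + a/x ↦ x^n + (a/x)^n is a well-defined bijection on the image of x ↦ x + a/x in F_q, and D_{n,a}: F_q → F_q is a permutation. -/

import Mathlib

open Polynomial

private lemma dickson_eval_pair {R : Type*} [CommRing R] (x y : R) :
    ∀ n : ℕ, Polynomial.eval (x + y) (Polynomial.dickson 1 (x * y) n) = x ^ n + y ^ n
  | 0 => by
      rw [Polynomial.dickson_zero]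
      simp
      norm_num
  | 1 => by simp [Polynomial.dickson_one]
  | n + 2 => by
      rw [Polynomial.dickson_add_two]
      simp only [Polynomial.eval_sub, Polynomial.eval_mul, Polynomial.eval_X, Polynomial.eval_C,
        dickson_eval_pair x y (n + 1), dickson_eval_pair x y n]
      ring

private lemma exists_pair {K : Type*} [Field K] [IsAlgClosed K] (u c : K) :
    ∃ x y : K, x + y = u ∧ x * y = c := by
  have hdeg : (Polynomial.C (1 : K) * Polynomial.X ^ 2 + Polynomial.C (-u) * Polynomial.X
      + Polynomial.C c).degree ≠ 0 := by
    rw [Polynomial.degree_quadratic one_ne_zero]; decide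
  obtain ⟨x, hx⟩ := IsAlgClosed.exists_root _ hdeg
  simp only [Polynomial.IsRoot, Polynomial.eval_add, Polynomial.eval_mul, Polynomial.eval_pow,
    Polynomial.eval_C, Polynomial.eval_X] at hx
  exact ⟨x, u - x, by ring, by linear_combination -hx⟩

/-- Let `F` be a finite field of odd order `q`, `a ∈ F^×`, and `n` odd
with `gcd(n, q² − 1) = 1`. Then the Dickson polynomial `D_{n,a}` is a permutation
polynomial of `F`. -/
theorem dickson_permutation {F : Type*} [Field F] [Fintype F]
    (hq : Odd (Fintype.card F)) (a : F) (ha : a ≠ 0) (n : ℕ) (hn : Odd n)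
    (hcop : Nat.Coprime n (Fintype.card F ^ 2 - 1)) :
    Function.Bijective (fun x : F => (Polynomial.dickson 1 a n).eval x) := by
  classical
  set q := Fintype.card F with hqdef
  rw [Fintype.bijective_iff_injective_and_card]
  refine ⟨?_, rfl⟩
  intro u v huv
  simp only at huv
  set K := AlgebraicClosure F
  set f := algebraMap F K with hfdef
  have hfinj : Function.Injective f := f.injective
  apply hfinj
  -- characteristic setup
  set p := ringChar F with hpdef
  haveI : CharP F p := ringChar.charP F
  obtain ⟨k, hp, hcard⟩ := FiniteField.card F p
  rw [← hqdef] at hcard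
  haveI : Fact p.Prime := ⟨hp⟩
  haveI : CharP K p := charP_of_injective_ringHom hfinj p
  haveI : ExpChar K p := ExpChar.prime hp
  have hq1 : 1 < q := Fintype.one_lt_card
  have hq2 : 1 < q ^ 2 := one_lt_pow' hq1 (by norm_num)
  have hq2pos : 0 < q ^ 2 - 1 := by omega
  have ha' : f a ≠ 0 := fun h => ha (hfinj (by simpa using h))
  -- key frobenius fact
  have key : ∀ (w : F) (x : K), x * (f w - x) = f a → x ^ (q ^ 2) = x := by
    intro w x hx
    have hfw : f w ^ q = f w := by rw [← map_pow, FiniteField.pow_card]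
    have hfa : f a ^ q = f a := by rw [← map_pow, FiniteField.pow_card]
    have hx' : x ^ q * (f w - x ^ q) = f a := by
      have h := congrArg (· ^ q) hx
      try simp only at h
      rw [mul_pow, hcard, sub_pow_char_pow, ← hcard, hfw, hfa] at h
      exact h
    have hcases : (x ^ q - x) * (x ^ q - (f w - x)) = 0 := by
      linear_combination hx - hx'
    have hsq : x ^ q ^ 2 = (x ^ q) ^ q := by rw [← pow_mul, pow_two]
    rcases mul_eq_zero.mp hcases with h | h
    · have hxx : x ^ q = x := sub_eq_zero.mp h
      rw [hsq, hxx, hxx]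
    · have hxx : x ^ q = f w - x := sub_eq_zero.mp h
      rw [hsq, hxx, hcard, sub_pow_char_pow, ← hcard, hfw, hxx]
      ring
  -- power map injectivity on (q²-1)-roots of unity
  have pow_inj : ∀ s t : K, s ^ (q ^ 2 - 1) = 1 → t ^ (q ^ 2 - 1) = 1 → s ^ n = t ^ n → s = t := by
    intro s t hs ht hst
    have ht0 : t ≠ 0 := by
      intro h; rw [h, zero_pow hq2pos.ne'] at ht; exact one_ne_zero ht.symm
    have hr1 : (s / t) ^ n = 1 := by rw [div_pow, hst, div_self (pow_ne_zero _ ht0)]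
    have hr2 : (s / t) ^ (q ^ 2 - 1) = 1 := by rw [div_pow, hs, ht, div_one]
    have : orderOf (s / t) ∣ 1 := by
      rw [← hcop]
      exact Nat.dvd_gcd (orderOf_dvd_of_pow_eq_one hr1) (orderOf_dvd_of_pow_eq_one hr2)
    have : s / t = 1 := orderOf_eq_one_iff.mp (Nat.dvd_one.mp this)
    exact (div_eq_one_iff_eq ht0).mp this
  have root_unity : ∀ x : K, x ≠ 0 → x ^ (q ^ 2) = x → x ^ (q ^ 2 - 1) = 1 := by
    intro x hx0 hxq
    have : x ^ (q ^ 2 - 1) * x = 1 * x := by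
      rw [one_mul, ← pow_succ, Nat.sub_add_cancel (by omega)]
      exact hxq
    exact mul_right_cancel₀ hx0 this
  -- decompose u and v
  obtain ⟨x, y, hxyadd, hxymul⟩ := exists_pair (f u) (f a)
  obtain ⟨z, w, hzwadd, hzwmul⟩ := exists_pair (f v) (f a)
  have hx0 : x ≠ 0 := fun h => ha' (by rw [← hxymul, h, zero_mul])
  have hy0 : y ≠ 0 := fun h => ha' (by rw [← hxymul, h, mul_zero])
  have hz0 : z ≠ 0 := fun h => ha' (by rw [← hzwmul, h, zero_mul])
  -- eval equality transported to K
  have heval : x ^ n + y ^ n = z ^ n + w ^ n := by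
    have h1 : f ((Polynomial.dickson 1 a n).eval u) = x ^ n + y ^ n := by
      rw [← Polynomial.eval₂_at_apply, ← Polynomial.eval_map, Polynomial.map_dickson,
        ← hxyadd, ← hxymul, dickson_eval_pair]
    have h2 : f ((Polynomial.dickson 1 a n).eval v) = z ^ n + w ^ n := by
      rw [← Polynomial.eval₂_at_apply, ← Polynomial.eval_map, Polynomial.map_dickson,
        ← hzwadd, ← hzwmul, dickson_eval_pair]
    rw [← h1, ← h2, huv]
  -- frobenius facts
  have hxq := key u x (by rw [show f u - x = y by rw [← hxyadd]; ring, hxymul])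
  have hyq := key u y (by rw [show f u - y = x by rw [← hxyadd]; ring]; rw [mul_comm]; exact hxymul)
  have hzq := key v z (by rw [show f v - z = w by rw [← hzwadd]; ring, hzwmul])
  have hx1 := root_unity x hx0 hxq
  have hy1 := root_unity y hy0 hyq
  have hz1 := root_unity z hz0 hzq
  -- z^n is x^n or y^n
  have hprod : x ^ n * y ^ n = z ^ n * w ^ n := by rw [← mul_pow, ← mul_pow, hxymul, hzwmul]
  have hcases : (z ^ n - x ^ n) * (z ^ n - y ^ n) = 0 := by
    linear_combination (-(z ^ n)) * heval + hprod
  rcases mul_eq_zero.mp hcases with h | h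
  · have hzx : z = x := pow_inj z x hz1 hx1 (sub_eq_zero.mp h)
    have hwy : w = y := by
      have h1 : x * w = f a := by rw [← hzx]; exact hzwmul
      exact mul_left_cancel₀ hx0 (h1.trans hxymul.symm)
    rw [← hxyadd, ← hzwadd, hzx, hwy]
  · have hzy : z = y := pow_inj z y hz1 hy1 (sub_eq_zero.mp h)
    have hwx : w = x := by
      have h1 : y * w = f a := by rw [← hzy]; exact hzwmul
      have h2 : y * x = f a := by rw [mul_comm]; exact hxymul
      exact mul_left_cancel₀ hy0 (h1.trans h2.symm)
    rw [← hxyadd, ← hzwadd, hzy, hwx, add_comm]
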